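/- arXiv:1310.2902 — 4 statements merged into one kernel-verified Lean document; each statement's English description precedes it below -/
import Mathlib

section
/- Every global mild solution u with initial datum φ ∈ W satisfies, for all t ≥ 0, the energy equality 𝓔(u(t),u̇(t)) + k ∫₀ᵗ ‖u̇(s)‖² ds = 𝓔(φ(0),φ'(0)) − ∫₀ᵗ ⟨F*(u(s)), u̇(s)⟩ ds − ∫₀ᵗ ⟨M(u_s), u̇(s)⟩ ds. -/
open Set Real MeasureTheory
open scoped RealInnerProductSpace

noncomputable section

/-- Euclidean space `ℝⁿ`. -/
abbrev Euc (n : ℕ) := EuclideanSpace ℝ (Fin n)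

/-- `(φ, φ')` is a `C¹` pair on `[-h,0]`: `φ'` is the (one-sided) derivative of `φ` on
`[-h,0]` and is continuous there. -/
def IsC1Pair (n : ℕ) (h : ℝ) (φ φ' : ℝ → Euc n) : Prop :=
  (∀ θ ∈ Icc (-h) (0:ℝ), HasDerivWithinAt φ (φ' θ) (Icc (-h) 0) θ) ∧
    ContinuousOn φ' (Icc (-h) 0)

/-- The norm of `W = C¹([-h,0];ℝⁿ)`:
`|φ|_W = max_{θ∈[-h,0]} ‖φ(θ)‖ + max_{θ∈[-h,0]} ‖φ'(θ)‖`. -/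
def Wnorm (n : ℕ) (h : ℝ) (φ φ' : ℝ → Euc n) : ℝ :=
  (⨆ θ : Icc (-h) (0:ℝ), ‖φ θ.1‖) + ⨆ θ : Icc (-h) (0:ℝ), ‖φ' θ.1‖

/-- A mild solution of `ü + k u̇ + A u + F(u) + M(u_t) = 0` on `[0,T)` with initial
datum `(φ, φ')`: `u` is `C¹` on `[-h,T)` with derivative `u'`, coincides with `φ` on
`[-h,0]`, and `u̇(t) = φ'(0) - ∫₀ᵗ (k u̇(s) + A u(s) + F(u(s)) + M(u_s)) ds` on `[0,T)`.
Here `M` takes the segment `u_s` as a pair (the function and its derivative). -/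
def IsMildSolOn (n : ℕ) (h k T : ℝ) (A : Euc n →L[ℝ] Euc n) (F : Euc n → Euc n)
    (M : (ℝ → Euc n) → (ℝ → Euc n) → Euc n) (φ φ' u u' : ℝ → Euc n) : Prop :=
  (∀ t ∈ Ico (-h) T, HasDerivWithinAt u (u' t) (Ico (-h) T) t) ∧
  ContinuousOn u' (Ico (-h) T) ∧
  (∀ θ ∈ Icc (-h) (0:ℝ), u θ = φ θ ∧ u' θ = φ' θ) ∧
  (∀ t ∈ Ico (0:ℝ) T, u' t = φ' 0 - ∫ s in (0:ℝ)..t,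
      (k • u' s + A (u s) + F (u s) + M (fun θ => u (s + θ)) (fun θ => u' (s + θ))))

/-- A global mild solution (on `[0,∞)`). -/
def IsGlobalMildSol (n : ℕ) (h k : ℝ) (A : Euc n →L[ℝ] Euc n) (F : Euc n → Euc n)
    (M : (ℝ → Euc n) → (ℝ → Euc n) → Euc n) (φ φ' u u' : ℝ → Euc n) : Prop :=
  (∀ t ∈ Ici (-h), HasDerivWithinAt u (u' t) (Ici (-h)) t) ∧
  ContinuousOn u' (Ici (-h)) ∧
  (∀ θ ∈ Icc (-h) (0:ℝ), u θ = φ θ ∧ u' θ = φ' θ) ∧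
  (∀ t ∈ Ici (0:ℝ), u' t = φ' 0 - ∫ s in (0:ℝ)..t,
      (k • u' s + A (u s) + F (u s) + M (fun θ => u (s + θ)) (fun θ => u' (s + θ))))

/-- Hypothesis (M1): local Lipschitz property of the delay term in the `W`-norm. -/
def HypM1 (n : ℕ) (h : ℝ) (M : (ℝ → Euc n) → (ℝ → Euc n) → Euc n) : Prop :=
  ∀ ρ > (0:ℝ), ∃ C > (0:ℝ), ∀ φ₁ φ₁' φ₂ φ₂' : ℝ → Euc n,
    IsC1Pair n h φ₁ φ₁' → IsC1Pair n h φ₂ φ₂' →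
    Wnorm n h φ₁ φ₁' ≤ ρ → Wnorm n h φ₂ φ₂' ≤ ρ →
    ‖M φ₁ φ₁' - M φ₂ φ₂'‖ ≤ C * Wnorm n h (φ₁ - φ₂) (φ₁' - φ₂')

/-- Auxiliary: derivative of a primitive of a function continuous on `[0,∞)`,
at an interior point. -/
lemma primitive_hasDerivAt_aux {E : Type*} [NormedAddCommGroup E] [NormedSpace ℝ E]
    [CompleteSpace E] {g : ℝ → E} (hg : ContinuousOn g (Ici (0:ℝ))) {s : ℝ} (hs : 0 < s) :
    HasDerivAt (fun τ => ∫ x in (0:ℝ)..τ, g x) (g s) s := by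
  refine intervalIntegral.integral_hasDerivAt_right ?_ ?_ ?_
  · refine ContinuousOn.intervalIntegrable ?_
    refine hg.mono ?_
    rw [uIcc_of_le hs.le]
    exact Icc_subset_Ici_self
  · exact ContinuousOn.stronglyMeasurableAtFilter isOpen_Ioi
      (hg.mono Ioi_subset_Ici_self) s hs
  · exact hg.continuousAt (Ici_mem_nhds hs)

/-- Energy equality for global mild solutions. -/
theorem energy_equality
    (n : ℕ) (hn : 1 ≤ n) (h k : ℝ) (hh : 0 < h) (hk : 0 < k)
    (A : Euc n →L[ℝ] Euc n)
    (hA_symm : ∀ x y : Euc n, ⟪A x, y⟫ = ⟪x, A y⟫)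
    (hA_pos : ∀ x : Euc n, x ≠ 0 → 0 < ⟪A x, x⟫)
    (F : Euc n → Euc n) (hF1 : LocallyLipschitz F)
    (M : (ℝ → Euc n) → (ℝ → Euc n) → Euc n)
    (hM1 : HypM1 n h M)
    -- Hypothesis (F2)
    (Pot Pot0 Pot1 : Euc n → ℝ) (Fstar : Euc n → Euc n)
    (hPot_smooth : ContDiff ℝ 1 Pot)
    (hF_grad : ∀ x : Euc n, HasGradientAt Pot (F x - Fstar x) x)
    (L_Fstar : NNReal) (hFstar_lip : LipschitzWith L_Fstar Fstar)
    (hPot_split : ∀ x, Pot x = Pot0 x + Pot1 x)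
    (hPot0_nonneg : ∀ x, 0 ≤ Pot0 x)
    (hPot1_bound : ∀ η > (0:ℝ), ∃ C > (0:ℝ), ∀ x : Euc n,
      |Pot1 x| ≤ η * (⟪A x, x⟫ + Pot0 x) + C)
    -- Hypothesis (M2)
    (M₀ M₁ : ℝ) (hM₀ : 0 ≤ M₀) (hM₁ : 0 ≤ M₁)
    (hM2 : ∀ φ φ' : ℝ → Euc n, IsC1Pair n h φ φ' →
      ‖M φ φ'‖ ≤ M₀ + M₁ * ((⨆ θ : Icc (-h) (0:ℝ), Real.sqrt ⟪A (φ θ.1), φ θ.1⟫) +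
        ⨆ θ : Icc (-h) (0:ℝ), ‖φ' θ.1‖))
    (φ φ' : ℝ → Euc n) (hφ : IsC1Pair n h φ φ')
    (u u' : ℝ → Euc n) (hu : IsGlobalMildSol n h k A F M φ φ' u u')
    -- the energy functionals
    (E calE : Euc n → Euc n → ℝ)
    (hE : ∀ x v : Euc n, E x v = (1/2) * (‖v‖^2 + ⟪A x, x⟫) + Pot0 x)
    (hcalE : ∀ x v : Euc n, calE x v = E x v + Pot1 x) :
    ∀ t ∈ Ici (0:ℝ),
      calE (u t) (u' t) + k * ∫ s in (0:ℝ)..t, ‖u' s‖^2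
        = calE (φ 0) (φ' 0)
          - (∫ s in (0:ℝ)..t, ⟪Fstar (u s), u' s⟫)
          - ∫ s in (0:ℝ)..t, ⟪M (fun θ => u (s + θ)) (fun θ => u' (s + θ)), u' s⟫ := by
  intro t ht
  have ht0 : (0:ℝ) ≤ t := ht
  obtain ⟨huD, hu'c, hmatch, hintg⟩ := hu
  have hh0 : (-h : ℝ) ≤ 0 := by linarith
  haveI : Nonempty ↑(Icc (-h) (0:ℝ)) := ⟨⟨0, ⟨hh0, le_rfl⟩⟩⟩
  have huc : ContinuousOn u (Ici (-h)) := fun s hs => (huD s hs).continuousWithinAt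
  have hsub0 : Ici (0:ℝ) ⊆ Ici (-h) := Ici_subset_Ici.2 (by linarith)
  -- segments are C¹ pairs
  have hseg : ∀ s ∈ Ici (0:ℝ), IsC1Pair n h (fun θ => u (s + θ)) (fun θ => u' (s + θ)) := by
    intro s hs
    have hs' : (0:ℝ) ≤ s := hs
    have hmaps : MapsTo (fun θ : ℝ => s + θ) (Icc (-h) 0) (Ici (-h)) := by
      intro θ hθ
      have h1 := hθ.1
      simp only [mem_Ici]
      linarith
    constructor
    · intro θ hθ
      have h1 : HasDerivWithinAt u (u' (s + θ)) (Ici (-h)) (s + θ) := huD _ (hmaps hθ)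
      have h2 : HasDerivWithinAt (fun θ : ℝ => s + θ) 1 (Icc (-h) 0) θ :=
        ((hasDerivAt_id θ).const_add s).hasDerivWithinAt
      simpa [Function.comp_def] using HasDerivWithinAt.scomp_of_eq θ h1 h2 hmaps rfl
    · exact hu'c.comp ((continuous_const.add continuous_id).continuousOn) hmaps
  -- continuity of s ↦ M (u_s)
  set Mc : ℝ → Euc n := fun s => M (fun θ => u (s + θ)) (fun θ => u' (s + θ)) with hMc_def
  have hMcont : ContinuousOn Mc (Ici (0:ℝ)) := by
    intro s₀ hs₀
    have hs₀' : (0:ℝ) ≤ s₀ := hs₀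
    have hKsub : Icc (-h) (s₀ + 1) ⊆ Ici (-h) := Icc_subset_Ici_self
    obtain ⟨B, hB⟩ := isCompact_Icc.exists_bound_of_continuousOn (huc.mono hKsub)
    obtain ⟨B', hB'⟩ := isCompact_Icc.exists_bound_of_continuousOn (hu'c.mono hKsub)
    have hmemK : ∀ s : ℝ, 0 ≤ s → s ≤ s₀ + 1 → ∀ θ ∈ Icc (-h) (0:ℝ),
        s + θ ∈ Icc (-h) (s₀ + 1) := by
      intro s hs hs1 θ hθ
      exact ⟨by linarith [hθ.1], by linarith [hθ.2]⟩
    have hB0 : 0 ≤ B := (norm_nonneg _).trans (hB 0 ⟨hh0, by linarith⟩)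
    have hB'0 : 0 ≤ B' := (norm_nonneg _).trans (hB' 0 ⟨hh0, by linarith⟩)
    obtain ⟨C, hCpos, hC⟩ := hM1 (B + B' + 1) (by linarith)
    have hWb : ∀ s : ℝ, 0 ≤ s → s ≤ s₀ + 1 →
        Wnorm n h (fun θ => u (s + θ)) (fun θ => u' (s + θ)) ≤ B + B' + 1 := by
      intro s hs hs1
      have h1 : (⨆ θ : Icc (-h) (0:ℝ), ‖u (s + θ.1)‖) ≤ B :=
        ciSup_le fun θ => hB _ (hmemK s hs hs1 θ.1 θ.2)
      have h2 : (⨆ θ : Icc (-h) (0:ℝ), ‖u' (s + θ.1)‖) ≤ B' :=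
        ciSup_le fun θ => hB' _ (hmemK s hs hs1 θ.1 θ.2)
      have hW : Wnorm n h (fun θ => u (s + θ)) (fun θ => u' (s + θ))
          = (⨆ θ : Icc (-h) (0:ℝ), ‖u (s + θ.1)‖)
            + ⨆ θ : Icc (-h) (0:ℝ), ‖u' (s + θ.1)‖ := rfl
      rw [hW]; linarith
    rw [Metric.continuousWithinAt_iff]
    intro ε hε
    have hε' : 0 < ε / (4 * C) := by positivity
    have huu : UniformContinuousOn u (Icc (-h) (s₀ + 1)) :=
      isCompact_Icc.uniformContinuousOn_of_continuous (huc.mono hKsub)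
    have huu' : UniformContinuousOn u' (Icc (-h) (s₀ + 1)) :=
      isCompact_Icc.uniformContinuousOn_of_continuous (hu'c.mono hKsub)
    rw [Metric.uniformContinuousOn_iff] at huu huu'
    obtain ⟨δ₁, hδ₁, hδ₁'⟩ := huu _ hε'
    obtain ⟨δ₂, hδ₂, hδ₂'⟩ := huu' _ hε'
    refine ⟨min (min δ₁ δ₂) 1, by positivity, ?_⟩
    intro s hs hdist
    have hs' : (0:ℝ) ≤ s := hs
    have hd1 : dist s s₀ < δ₁ := lt_of_lt_of_le hdist ((min_le_left _ _).trans (min_le_left _ _))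
    have hd2 : dist s s₀ < δ₂ := lt_of_lt_of_le hdist ((min_le_left _ _).trans (min_le_right _ _))
    have hd3 : dist s s₀ < 1 := lt_of_lt_of_le hdist (min_le_right _ _)
    have hss : s ≤ s₀ + 1 := by
      rw [Real.dist_eq, abs_lt] at hd3
      linarith [hd3.1, hd3.2]
    have hdshift : ∀ θ : ℝ, dist (s + θ) (s₀ + θ) = dist s s₀ := by
      intro θ
      rw [Real.dist_eq, Real.dist_eq]
      ring_nf
    have key : ∀ θ : Icc (-h) (0:ℝ), ‖u (s + θ.1) - u (s₀ + θ.1)‖ ≤ ε / (4 * C) := by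
      intro θ
      have hm1 := hmemK s hs' hss θ.1 θ.2
      have hm2 := hmemK s₀ hs₀' (by linarith) θ.1 θ.2
      have hlt : dist (s + θ.1) (s₀ + θ.1) < δ₁ := by rw [hdshift]; exact hd1
      have := hδ₁' _ hm1 _ hm2 hlt
      rw [dist_eq_norm] at this
      exact this.le
    have key' : ∀ θ : Icc (-h) (0:ℝ), ‖u' (s + θ.1) - u' (s₀ + θ.1)‖ ≤ ε / (4 * C) := by
      intro θ
      have hm1 := hmemK s hs' hss θ.1 θ.2
      have hm2 := hmemK s₀ hs₀' (by linarith) θ.1 θ.2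
      have hlt : dist (s + θ.1) (s₀ + θ.1) < δ₂ := by rw [hdshift]; exact hd2
      have := hδ₂' _ hm1 _ hm2 hlt
      rw [dist_eq_norm] at this
      exact this.le
    have hWdiff : Wnorm n h ((fun θ => u (s + θ)) - fun θ => u (s₀ + θ))
        ((fun θ => u' (s + θ)) - fun θ => u' (s₀ + θ)) ≤ ε / (4 * C) + ε / (4 * C) := by
      have h1 : (⨆ θ : Icc (-h) (0:ℝ),
          ‖((fun θ => u (s + θ)) - fun θ => u (s₀ + θ)) θ.1‖) ≤ ε / (4 * C) :=
        ciSup_le fun θ => by simpa [Pi.sub_apply] using key θ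
      have h2 : (⨆ θ : Icc (-h) (0:ℝ),
          ‖((fun θ => u' (s + θ)) - fun θ => u' (s₀ + θ)) θ.1‖) ≤ ε / (4 * C) :=
        ciSup_le fun θ => by simpa [Pi.sub_apply] using key' θ
      exact add_le_add h1 h2
    have hMb := hC _ _ _ _ (hseg s hs) (hseg s₀ hs₀) (hWb s hs' hss) (hWb s₀ hs₀' (by linarith))
    rw [dist_eq_norm]
    calc ‖Mc s - Mc s₀‖ ≤ C * Wnorm n h ((fun θ => u (s + θ)) - fun θ => u (s₀ + θ))
          ((fun θ => u' (s + θ)) - fun θ => u' (s₀ + θ)) := hMb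
      _ ≤ C * (ε / (4 * C) + ε / (4 * C)) := by
          exact mul_le_mul_of_nonneg_left hWdiff hCpos.le
      _ = ε / 2 := by field_simp; ring
      _ < ε := by linarith
  -- the full right-hand side of the ODE
  set G : ℝ → Euc n := fun s => k • u' s + A (u s) + F (u s) + Mc s with hG_def
  have hu'c0 : ContinuousOn u' (Ici (0:ℝ)) := hu'c.mono hsub0
  have huc0 : ContinuousOn u (Ici (0:ℝ)) := huc.mono hsub0
  have hGc : ContinuousOn G (Ici (0:ℝ)) :=
    (((hu'c0.const_smul k).add (A.continuous.comp_continuousOn huc0)).add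
      (hF1.continuous.comp_continuousOn huc0)).add hMcont
  have heq : ∀ τ ∈ Ici (0:ℝ), u' τ = φ' 0 - ∫ x in (0:ℝ)..τ, G x := by
    intro τ hτ
    simp only [hG_def, hMc_def]
    exact hintg τ hτ
  have hu''d : ∀ s : ℝ, 0 < s → HasDerivAt u' (-(G s)) s := by
    intro s hs
    have h1 : HasDerivAt (fun τ => φ' 0 - ∫ x in (0:ℝ)..τ, G x) (-(G s)) s := by
      have h2 := primitive_hasDerivAt_aux hGc hs
      simpa using h2.const_sub (φ' 0)
    refine h1.congr_of_eventuallyEq ?_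
    filter_upwards [Ici_mem_nhds hs] with τ hτ
    exact heq τ hτ
  -- integrand continuity
  have hg1c : ContinuousOn (fun s => ‖u' s‖^2) (Ici (0:ℝ)) := hu'c0.norm.pow 2
  have hg2c : ContinuousOn (fun s => ⟪Fstar (u s), u' s⟫) (Ici (0:ℝ)) :=
    ContinuousOn.inner (hFstar_lip.continuous.comp_continuousOn huc0) hu'c0
  have hg3c : ContinuousOn (fun s => ⟪Mc s, u' s⟫) (Ici (0:ℝ)) :=
    ContinuousOn.inner hMcont hu'c0
  -- the conserved quantity
  set Φ : ℝ → ℝ := fun τ =>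
    (1/2) * (‖u' τ‖^2 + ⟪A (u τ), u τ⟫) + Pot (u τ)
      + k * (∫ s in (0:ℝ)..τ, ‖u' s‖^2)
      + (∫ s in (0:ℝ)..τ, ⟪Fstar (u s), u' s⟫)
      + ∫ s in (0:ℝ)..τ, ⟪Mc s, u' s⟫ with hΦ_def
  have hΦd : ∀ s ∈ Ioo (0:ℝ) t, HasDerivAt Φ 0 s := by
    intro s hs
    have hs0 : (0:ℝ) < s := hs.1
    have hud : HasDerivAt u (u' s) s :=
      (huD s (mem_Ici.2 (by linarith))).hasDerivAt (Ici_mem_nhds (by linarith))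
    have hu'' : HasDerivAt u' (-(G s)) s := hu''d s hs0
    have hsq : HasDerivAt (fun τ => ‖u' τ‖^2) (⟪u' s, -(G s)⟫ + ⟪-(G s), u' s⟫) s := by
      have h1 := HasDerivAt.inner ℝ hu'' hu''
      have hfn : (fun τ => ‖u' τ‖^2) = fun τ => ⟪u' τ, u' τ⟫ :=
        funext fun τ => (real_inner_self_eq_norm_sq _).symm
      rw [hfn]
      exact h1
    have hAd : HasDerivAt (fun τ => A (u τ)) (A (u' s)) s := A.hasFDerivAt.comp_hasDerivAt s hud
    have hAq : HasDerivAt (fun τ => ⟪A (u τ), u τ⟫) (⟪A (u s), u' s⟫ + ⟪A (u' s), u s⟫) s :=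
      HasDerivAt.inner ℝ hAd hud
    have hPd : HasDerivAt (fun τ => Pot (u τ)) (⟪F (u s) - Fstar (u s), u' s⟫) s := by
      have h1 := ((hF_grad (u s)).hasFDerivAt).comp_hasDerivAt s hud
      simpa only [Function.comp_def, InnerProductSpace.toDual_apply_apply] using h1
    have hI1 : HasDerivAt (fun τ => ∫ x in (0:ℝ)..τ, ‖u' x‖^2) (‖u' s‖^2) s :=
      primitive_hasDerivAt_aux hg1c hs0
    have hI2 : HasDerivAt (fun τ => ∫ x in (0:ℝ)..τ, ⟪Fstar (u x), u' x⟫)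
        (⟪Fstar (u s), u' s⟫) s := primitive_hasDerivAt_aux hg2c hs0
    have hI3 : HasDerivAt (fun τ => ∫ x in (0:ℝ)..τ, ⟪Mc x, u' x⟫) (⟪Mc s, u' s⟫) s :=
      primitive_hasDerivAt_aux hg3c hs0
    have total := ((((hsq.add hAq).const_mul (1/2:ℝ)).add hPd).add (hI1.const_mul k)).add
      hI2 |>.add hI3
    have hGs : G s = k • u' s + A (u s) + F (u s) + Mc s := rfl
    have e1 : ⟪-(G s), u' s⟫ = -(k * ‖u' s‖^2 + ⟪A (u s), u' s⟫ + ⟪F (u s), u' s⟫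
        + ⟪Mc s, u' s⟫) := by
      simp only [hGs, inner_neg_left, inner_add_left, real_inner_smul_left,
        real_inner_self_eq_norm_sq]
    have e2 : ⟪u' s, -(G s)⟫ = -(k * ‖u' s‖^2 + ⟪A (u s), u' s⟫ + ⟪F (u s), u' s⟫
        + ⟪Mc s, u' s⟫) := (real_inner_comm _ _).trans e1
    have e3 : ⟪A (u' s), u s⟫ = ⟪A (u s), u' s⟫ := by
      rw [hA_symm, real_inner_comm]
    have e4 : ⟪F (u s) - Fstar (u s), u' s⟫ = ⟪F (u s), u' s⟫ - ⟪Fstar (u s), u' s⟫ :=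
      inner_sub_left _ _ _
    have hzero : (1/2 : ℝ) * ((⟪u' s, -(G s)⟫ + ⟪-(G s), u' s⟫)
          + (⟪A (u s), u' s⟫ + ⟪A (u' s), u s⟫))
        + ⟪F (u s) - Fstar (u s), u' s⟫ + k * ‖u' s‖^2 + ⟪Fstar (u s), u' s⟫
        + ⟪Mc s, u' s⟫ = 0 := by
      rw [e1, e2, e3, e4]
      ring
    rw [← hzero]
    exact total
  have hsubt : Icc (0:ℝ) t ⊆ Ici (0:ℝ) := Icc_subset_Ici_self
  have hprimc : ∀ (g : ℝ → ℝ), ContinuousOn g (Ici (0:ℝ)) →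
      ContinuousOn (fun τ => ∫ x in (0:ℝ)..τ, g x) (Icc (0:ℝ) t) := by
    intro g hg
    have hInt : IntegrableOn g (uIcc (0:ℝ) t) := by
      rw [uIcc_of_le ht0]
      exact (hg.mono (Icc_subset_Ici_self)).integrableOn_Icc
    have := intervalIntegral.continuousOn_primitive_interval hInt
    rwa [uIcc_of_le ht0] at this
  have hΦc : ContinuousOn Φ (Icc (0:ℝ) t) := by
    refine ContinuousOn.add (ContinuousOn.add (ContinuousOn.add (ContinuousOn.add ?_ ?_) ?_) ?_) ?_
    · exact continuousOn_const.mul (((hu'c0.norm.pow 2).add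
        (ContinuousOn.inner (A.continuous.comp_continuousOn huc0) huc0)).mono hsubt)
    · exact hPot_smooth.continuous.comp_continuousOn (huc0.mono hsubt)
    · exact continuousOn_const.mul (hprimc _ hg1c)
    · exact hprimc _ hg2c
    · exact hprimc _ hg3c
  have hkey := intervalIntegral.integral_eq_sub_of_hasDeriv_right_of_le ht0 hΦc
    (fun s hs => (hΦd s hs).hasDerivWithinAt) (intervalIntegrable_const (c := (0:ℝ)))
  have hΦconst : Φ t = Φ 0 := by
    have : (∫ _ in (0:ℝ)..t, (0:ℝ)) = 0 := by simp
    rw [this] at hkey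
    linarith [hkey]
  have hu0 : u 0 = φ 0 := (hmatch 0 ⟨hh0, le_rfl⟩).1
  have hu'0 : u' 0 = φ' 0 := (hmatch 0 ⟨hh0, le_rfl⟩).2
  have hΦ0 : Φ 0 = (1/2) * (‖φ' 0‖^2 + ⟪A (φ 0), φ 0⟫) + Pot (φ 0) := by
    simp only [hΦ_def, intervalIntegral.integral_same, hu0, hu'0]
    ring
  have hΦt : Φ t = (1/2) * (‖u' t‖^2 + ⟪A (u t), u t⟫) + Pot (u t)
      + k * (∫ s in (0:ℝ)..t, ‖u' s‖^2)
      + (∫ s in (0:ℝ)..t, ⟪Fstar (u s), u' s⟫)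
      + ∫ s in (0:ℝ)..t, ⟪M (fun θ => u (s + θ)) (fun θ => u' (s + θ)), u' s⟫ := by
    simp only [hΦ_def, hMc_def]
  rw [hcalE, hcalE, hE, hE]
  have hs1 := hPot_split (u t)
  have hs2 := hPot_split (φ 0)
  rw [hΦt, hΦ0] at hΦconst
  linarith [hΦconst]
end
end

section
/- There exist constants M ≥ 1 and λ > 0 such that for all t ≥ 0 the operator norm satisfies ‖exp(−t𝒜)‖ ≤ M e^{−λ t}; in other words, the semigroup generated by −𝒜 on ℝⁿ × ℝⁿ is exponentially stable. -/
open Set Real MeasureTheory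
open scoped RealInnerProductSpace

noncomputable section

lemma coercive' (n : ℕ) (hn : 1 ≤ n) (A : Euc n →L[ℝ] Euc n)
    (hA_pos : ∀ x : Euc n, x ≠ 0 → 0 < ⟪A x, x⟫) :
    ∃ a > (0:ℝ), ∀ u : Euc n, a * ‖u‖^2 ≤ ⟪A u, u⟫ := by
  haveI : Nonempty (Fin n) := ⟨⟨0, hn⟩⟩
  have hcomp : IsCompact (Metric.sphere (0:Euc n) 1) := isCompact_sphere 0 1
  have hne : (Metric.sphere (0:Euc n) 1).Nonempty := NormedSpace.sphere_nonempty.mpr zero_le_one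
  have hcont : Continuous fun u : Euc n => ⟪A u, u⟫ := A.continuous.inner continuous_id
  obtain ⟨w, hw, hmin⟩ := hcomp.exists_isMinOn hne hcont.continuousOn
  have hwn : ‖w‖ = 1 := by simpa using hw
  have hw0 : w ≠ 0 := by intro h; rw [h, norm_zero] at hwn; norm_num at hwn
  refine ⟨⟪A w, w⟫, hA_pos w hw0, ?_⟩
  intro u
  rcases eq_or_ne u 0 with rfl | hu
  · simp
  · have hnu : (0:ℝ) < ‖u‖ := norm_pos_iff.mpr hu
    have hmem : (‖u‖⁻¹ • u) ∈ Metric.sphere (0:Euc n) 1 := by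
      simp [norm_smul, abs_of_nonneg (le_of_lt (inv_pos.mpr hnu)),
        inv_mul_cancel₀ hnu.ne']
    have h1 : ⟪A w, w⟫ ≤ ⟪A (‖u‖⁻¹ • u), ‖u‖⁻¹ • u⟫ := hmin hmem
    have h2 : ⟪A (‖u‖⁻¹ • u), ‖u‖⁻¹ • u⟫ = ‖u‖⁻¹ * (‖u‖⁻¹ * ⟪A u, u⟫) := by
      rw [_root_.map_smul, real_inner_smul_left, real_inner_smul_right]
    rw [h2] at h1
    have := mul_le_mul_of_nonneg_left h1 (le_of_lt (mul_pos hnu hnu))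
    calc ⟪A w, w⟫ * ‖u‖^2 = ‖u‖ * ‖u‖ * ⟪A w, w⟫ := by ring
      _ ≤ ‖u‖ * ‖u‖ * (‖u‖⁻¹ * (‖u‖⁻¹ * ⟪A u, u⟫)) := this
      _ = ⟪A u, u⟫ := by field_simp

lemma flow_deriv' (n : ℕ) (𝓐 : (Euc n × Euc n) →L[ℝ] (Euc n × Euc n))
    (p₀ : Euc n × Euc n) (t : ℝ) :
    HasDerivAt (fun s : ℝ => NormedSpace.exp (-(s • 𝓐)) p₀)
      (-(𝓐 (NormedSpace.exp (-(t • 𝓐)) p₀))) t := by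
  have h0 : ∀ s : ℝ, -(s • 𝓐) = s • (-𝓐) := by intro s; simp
  have h1 := hasDerivAt_exp_smul_const' (𝕂 := ℝ) (-𝓐) t
  have h2 : HasDerivAt (fun s : ℝ => NormedSpace.exp (s • (-𝓐)) p₀)
      (((-𝓐) * NormedSpace.exp (t • (-𝓐))) p₀) t :=
    h1.clm_apply (hasDerivAt_const _ _) |>.congr_deriv (by simp)
  simp only [← h0, ContinuousLinearMap.mul_apply] at h2; exact h2

lemma key_ineq' (n : ℕ) (k : ℝ) (hk : 0 < k) (A : Euc n →L[ℝ] Euc n)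
    (hA_symm : ∀ x y : Euc n, ⟪A x, y⟫ = ⟪x, A y⟫)
    (a : ℝ) (ha : 0 < a) (hcoer : ∀ u : Euc n, a * ‖u‖^2 ≤ ⟪A u, u⟫)
    (ε : ℝ) (hε : 0 < ε) (hε1 : ε * (2 + k^2/a) ≤ k)
    (c : ℝ) (hc : 0 < c) (hc1 : c * (1+ε) ≤ k) (hc2 : c * (1+ε/a) ≤ ε)
    (u v : Euc n) :
    (⟪A u, v⟫ + ⟪A v, u⟫) + (⟪v, -(A u + k•v)⟫ + ⟪-(A u + k•v), v⟫)
      + 2*ε*(⟪u, -(A u + k•v)⟫ + ⟪v, v⟫)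
    ≤ -c * (⟪A u, u⟫ + ⟪v,v⟫ + 2*ε*⟪u,v⟫) := by
  have hsym : ⟪A v, u⟫ = ⟪A u, v⟫ := by rw [hA_symm, real_inner_comm]
  have hsymu : ⟪u, A u⟫ = ⟪A u, u⟫ := real_inner_comm _ _
  simp only [inner_neg_left, inner_neg_right, inner_add_left, inner_add_right,
    real_inner_smul_left, real_inner_smul_right, hsym, hsymu]
  have hvu : ⟪v, A u⟫ = ⟪A u, v⟫ := real_inner_comm _ _
  rw [hvu]
  set Q := ⟪A u, u⟫ with hQ
  set P := ⟪u, v⟫ with hP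
  have hvv : ⟪v, v⟫ = ‖v‖^2 := real_inner_self_eq_norm_sq v
  rw [hvv]
  set U := ‖u‖; set V := ‖v‖
  have hU : 0 ≤ U := norm_nonneg u
  have hV : 0 ≤ V := norm_nonneg v
  have haU : a * U^2 ≤ Q := hcoer u
  have hPle : P ≤ U * V := real_inner_le_norm u v
  have hPge : -(U * V) ≤ P := neg_le_of_abs_le (abs_real_inner_le_norm u v)
  have hQ0 : 0 ≤ Q := le_trans (by positivity) haU
  have hcross : 2*k*(U*V) ≤ a*U^2 + (k^2/a)*V^2 := by
    have h := sq_nonneg (a*U - k*V)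
    have : 2*k*(U*V)*a ≤ (a*U^2 + (k^2/a)*V^2)*a := by
      field_simp
      nlinarith [h]
    exact le_of_mul_le_mul_right this ha
  have h2P : 2*P ≤ U^2 + V^2 := by nlinarith [sq_nonneg (U - V)]
  have hεa : ε * U^2 ≤ (ε/a) * Q := by
    have := mul_le_mul_of_nonneg_left haU (le_of_lt (div_pos hε ha))
    have heq : (ε/a) * (a * U^2) = ε * U^2 := by field_simp
    linarith [this]
  nlinarith [mul_le_mul_of_nonneg_left hcross (le_of_lt hε),
    mul_le_mul_of_nonneg_left h2P (le_of_lt hε),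
    mul_le_mul_of_nonneg_left hPge (mul_nonneg (le_of_lt hε) (le_of_lt hk)),
    mul_le_mul_of_nonneg_left hεa (le_of_lt hc),
    mul_le_mul_of_nonneg_left h2P (mul_nonneg (le_of_lt hc) (le_of_lt hε)),
    mul_pos hε hk, sq_nonneg V, sq_nonneg U, hQ0,
    mul_le_mul_of_nonneg_left hε1 (le_of_lt hε)]

set_option maxHeartbeats 2000000 in
/-- The semigroup `exp(-t𝒜)` generated by `-𝒜`, where
`𝒜(u,v) = (-v, Au + kv)` on `ℝⁿ × ℝⁿ`, is exponentially stable. -/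
theorem semigroup_exponentially_stable
    (n : ℕ) (hn : 1 ≤ n) (k : ℝ) (hk : 0 < k)
    (A : Euc n →L[ℝ] Euc n)
    (hA_symm : ∀ x y : Euc n, ⟪A x, y⟫ = ⟪x, A y⟫)
    (hA_pos : ∀ x : Euc n, x ≠ 0 → 0 < ⟪A x, x⟫)
    (𝓐 : (Euc n × Euc n) →L[ℝ] (Euc n × Euc n))
    (h𝓐 : ∀ p : Euc n × Euc n, 𝓐 p = (-p.2, A p.1 + k • p.2)) :
    ∃ M : ℝ, 1 ≤ M ∧ ∃ lam > (0:ℝ), ∀ t : ℝ, 0 ≤ t →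
      ‖NormedSpace.exp (-(t • 𝓐))‖ ≤ M * Real.exp (-lam * t) := by
  obtain ⟨a, ha, hcoer⟩ := coercive' n hn A hA_pos
  set ε : ℝ := min (k / (2 + k^2/a)) (min (a/2) (1/2)) with hεdef
  have hden : (0:ℝ) < 2 + k^2/a := by positivity
  have hε : 0 < ε := lt_min (div_pos hk hden) (lt_min (by linarith) (by norm_num))
  have hε1 : ε * (2 + k^2/a) ≤ k := by
    have := min_le_left (k / (2 + k^2/a)) (min (a/2) (1/2))
    calc ε * (2 + k^2/a) ≤ (k / (2 + k^2/a)) * (2 + k^2/a) :=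
          mul_le_mul_of_nonneg_right this (le_of_lt hden)
      _ = k := div_mul_cancel₀ k hden.ne'
  have hε2 : ε ≤ a/2 := le_trans (min_le_right _ _) (min_le_left _ _)
  have hε3 : ε ≤ 1/2 := le_trans (min_le_right _ _) (min_le_right _ _)
  set c : ℝ := min (k/(1+ε)) (ε/(1+ε/a)) with hcdef
  have h1ε : (0:ℝ) < 1 + ε := by linarith
  have h1εa : (0:ℝ) < 1 + ε/a := by positivity
  have hc : 0 < c := lt_min (div_pos hk h1ε) (div_pos hε h1εa)
  have hc1 : c * (1+ε) ≤ k := by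
    calc c * (1+ε) ≤ (k/(1+ε)) * (1+ε) :=
          mul_le_mul_of_nonneg_right (min_le_left _ _) (le_of_lt h1ε)
      _ = k := div_mul_cancel₀ k h1ε.ne'
  have hc2 : c * (1+ε/a) ≤ ε := by
    calc c * (1+ε/a) ≤ (ε/(1+ε/a)) * (1+ε/a) :=
          mul_le_mul_of_nonneg_right (min_le_right _ _) (le_of_lt h1εa)
      _ = ε := div_mul_cancel₀ ε h1εa.ne'
  -- energy function
  set E : Euc n × Euc n → ℝ :=
    fun p => ⟪A p.1, p.1⟫ + ⟪p.2, p.2⟫ + 2*ε*⟪p.1, p.2⟫ with hEdef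
  set c₁ : ℝ := min (a/2) (1/2) with hc₁def
  have hc₁ : 0 < c₁ := lt_min (by linarith) (by norm_num)
  set C₂ : ℝ := ‖A‖ + 2 with hC₂def
  have hC₂ : 0 < C₂ := by positivity
  -- bounds on E
  have hlow : ∀ p : Euc n × Euc n, c₁ * ‖p‖^2 ≤ E p := by
    intro p
    obtain ⟨u, v⟩ := p
    have hvv : ⟪v, v⟫ = ‖v‖^2 := real_inner_self_eq_norm_sq v
    have haU : a * ‖u‖^2 ≤ ⟪A u, u⟫ := hcoer u
    have hPge : -(‖u‖ * ‖v‖) ≤ ⟪u, v⟫ := neg_le_of_abs_le (abs_real_inner_le_norm u v)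
    have hpn : ‖((u,v) : Euc n × Euc n)‖^2 ≤ ‖u‖^2 + ‖v‖^2 := by
      rw [Prod.norm_def]
      rcases max_cases ‖u‖ ‖v‖ with ⟨h, _⟩ | ⟨h, _⟩ <;> rw [h] <;> nlinarith [sq_nonneg ‖u‖, sq_nonneg ‖v‖]
    have h2P : 2*(‖u‖*‖v‖) ≤ ‖u‖^2 + ‖v‖^2 := by nlinarith [sq_nonneg (‖u‖ - ‖v‖)]
    have hc₁a : c₁ ≤ a/2 := min_le_left _ _
    have hc₁1 : c₁ ≤ 1/2 := min_le_right _ _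
    simp only [hEdef, hvv]
    have f1 : ε*(2*(‖u‖*‖v‖)) ≤ ε*(‖u‖^2 + ‖v‖^2) :=
      mul_le_mul_of_nonneg_left h2P (le_of_lt hε)
    have f2 : (2*ε)*(-(‖u‖*‖v‖)) ≤ (2*ε)*⟪u, v⟫ :=
      mul_le_mul_of_nonneg_left hPge (by positivity)
    have f3 : c₁*‖((u,v) : Euc n × Euc n)‖^2 ≤ c₁*(‖u‖^2+‖v‖^2) :=
      mul_le_mul_of_nonneg_left hpn (le_of_lt hc₁)
    have f4 : ε*‖u‖^2 ≤ (a/2)*‖u‖^2 := mul_le_mul_of_nonneg_right hε2 (sq_nonneg _)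
    have f5 : ε*‖v‖^2 ≤ (1/2)*‖v‖^2 := mul_le_mul_of_nonneg_right hε3 (sq_nonneg _)
    have f6 : c₁*‖u‖^2 ≤ (a/2)*‖u‖^2 := mul_le_mul_of_nonneg_right hc₁a (sq_nonneg _)
    have f7 : c₁*‖v‖^2 ≤ (1/2)*‖v‖^2 := mul_le_mul_of_nonneg_right hc₁1 (sq_nonneg _)
    linarith
  have hupp : ∀ p : Euc n × Euc n, E p ≤ C₂ * ‖p‖^2 := by
    intro p
    obtain ⟨u, v⟩ := p
    have hvv : ⟪v, v⟫ = ‖v‖^2 := real_inner_self_eq_norm_sq v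
    have hQle : ⟪A u, u⟫ ≤ ‖A‖ * ‖u‖^2 := by
      calc ⟪A u, u⟫ ≤ ‖A u‖ * ‖u‖ := real_inner_le_norm _ _
        _ ≤ (‖A‖ * ‖u‖) * ‖u‖ :=
            mul_le_mul_of_nonneg_right (A.le_opNorm u) (norm_nonneg u)
        _ = ‖A‖ * ‖u‖^2 := by ring
    have hPle : ⟪u, v⟫ ≤ ‖u‖ * ‖v‖ := real_inner_le_norm u v
    have hu : ‖u‖ ≤ ‖((u,v) : Euc n × Euc n)‖ := by rw [Prod.norm_def]; exact le_max_left _ _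
    have hv : ‖v‖ ≤ ‖((u,v) : Euc n × Euc n)‖ := by rw [Prod.norm_def]; exact le_max_right _ _
    have hp0 : (0:ℝ) ≤ ‖((u,v) : Euc n × Euc n)‖ := norm_nonneg _
    have hA0 : (0:ℝ) ≤ ‖A‖ := norm_nonneg A
    simp only [hEdef, hvv]
    have hu2 : ‖u‖^2 ≤ ‖((u,v) : Euc n × Euc n)‖^2 := by nlinarith [norm_nonneg u]
    have hv2 : ‖v‖^2 ≤ ‖((u,v) : Euc n × Euc n)‖^2 := by nlinarith [norm_nonneg v]
    have huv : ‖u‖*‖v‖ ≤ ‖((u,v) : Euc n × Euc n)‖^2 := by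
      nlinarith [norm_nonneg u, norm_nonneg v]
    have g1 : ‖A‖*‖u‖^2 ≤ ‖A‖*‖((u,v) : Euc n × Euc n)‖^2 :=
      mul_le_mul_of_nonneg_left hu2 hA0
    have g2 : (2*ε)*⟪u, v⟫ ≤ (2*ε)*(‖u‖*‖v‖) :=
      mul_le_mul_of_nonneg_left hPle (by positivity)
    have g3 : (2*ε)*(‖u‖*‖v‖) ≤ 1*(‖u‖*‖v‖) :=
      mul_le_mul_of_nonneg_right (by linarith) (by positivity)
    have gC : C₂*‖((u,v) : Euc n × Euc n)‖^2
        = ‖A‖*‖((u,v) : Euc n × Euc n)‖^2 + 2*‖((u,v) : Euc n × Euc n)‖^2 := by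
      rw [hC₂def]; ring
    linarith
  -- main estimate
  refine ⟨max 1 (Real.sqrt (C₂/c₁)), le_max_left _ _, c/2, by positivity, ?_⟩
  intro t ht
  set M := max 1 (Real.sqrt (C₂/c₁)) with hMdef
  have hM1 : (1:ℝ) ≤ M := le_max_left _ _
  have hM0 : (0:ℝ) ≤ M := by linarith
  have hMsq : C₂/c₁ ≤ M^2 := by
    have h1 : Real.sqrt (C₂/c₁) ≤ M := le_max_right _ _
    have h2 : (Real.sqrt (C₂/c₁))^2 = C₂/c₁ := Real.sq_sqrt (by positivity)
    nlinarith [Real.sqrt_nonneg (C₂/c₁)]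
  apply ContinuousLinearMap.opNorm_le_bound _ (by positivity)
  intro p₀
  set x : ℝ → Euc n × Euc n := fun s => NormedSpace.exp (-(s • 𝓐)) p₀ with hxdef
  have hx : ∀ s, HasDerivAt x (((x s).2, -(A (x s).1 + k • (x s).2))) s := by
    intro s
    have h := flow_deriv' n 𝓐 p₀ s
    convert h using 1
    rw [h𝓐 (x s)]
    ext <;> simp
  have hf : ∀ s, HasDerivAt (fun r => E (x r))
      ((⟪A (x s).1, (x s).2⟫ + ⟪A ((x s).2), (x s).1⟫)
        + (⟪(x s).2, -(A (x s).1 + k•(x s).2)⟫ + ⟪-(A (x s).1 + k•(x s).2), (x s).2⟫)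
        + 2*ε*(⟪(x s).1, -(A (x s).1 + k•(x s).2)⟫ + ⟪(x s).2, (x s).2⟫)) s := by
    intro s
    have hu : HasDerivAt (fun r => (x r).1) ((x s).2) s :=
      (ContinuousLinearMap.fst ℝ (Euc n) (Euc n)).hasFDerivAt.comp_hasDerivAt s (hx s)
    have hv : HasDerivAt (fun r => (x r).2) (-(A (x s).1 + k•(x s).2)) s :=
      (ContinuousLinearMap.snd ℝ (Euc n) (Euc n)).hasFDerivAt.comp_hasDerivAt s (hx s)
    have hAu : HasDerivAt (fun r => A ((x r).1)) (A ((x s).2)) s :=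
      A.hasFDerivAt.comp_hasDerivAt s hu
    exact ((hAu.inner ℝ hu).add (hv.inner ℝ hv)).add ((hu.inner ℝ hv).const_mul (2*ε))
  have hdecay : ∀ s : ℝ, (⟪A (x s).1, (x s).2⟫ + ⟪A ((x s).2), (x s).1⟫)
        + (⟪(x s).2, -(A (x s).1 + k•(x s).2)⟫ + ⟪-(A (x s).1 + k•(x s).2), (x s).2⟫)
        + 2*ε*(⟪(x s).1, -(A (x s).1 + k•(x s).2)⟫ + ⟪(x s).2, (x s).2⟫)
      ≤ -c * E (x s) := by
    intro s
    have h := key_ineq' n k hk A hA_symm a ha hcoer ε hε hε1 c hc hc1 hc2 ((x s).1) ((x s).2)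
    simpa [hEdef] using h
  have hexp : ∀ s : ℝ, HasDerivAt (fun r : ℝ => Real.exp (c * r)) (c * Real.exp (c * s)) s := by
    intro s
    have hlin : HasDerivAt (fun r : ℝ => c * r) c s := by
      simpa using (hasDerivAt_id s).const_mul c
    have h := (Real.hasDerivAt_exp (c*s)).comp s hlin
    exact h.congr_deriv (by ring)
  set g : ℝ → ℝ := fun s => E (x s) * Real.exp (c * s) with hgdef
  have hg : ∀ s : ℝ, HasDerivAt g
      (((⟪A (x s).1, (x s).2⟫ + ⟪A ((x s).2), (x s).1⟫)
        + (⟪(x s).2, -(A (x s).1 + k•(x s).2)⟫ + ⟪-(A (x s).1 + k•(x s).2), (x s).2⟫)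
        + 2*ε*(⟪(x s).1, -(A (x s).1 + k•(x s).2)⟫ + ⟪(x s).2, (x s).2⟫)) * Real.exp (c*s)
        + E (x s) * (c * Real.exp (c*s))) s := fun s => (hf s).mul (hexp s)
  have hgderiv : ∀ s, deriv g s ≤ 0 := by
    intro s
    rw [(hg s).deriv]
    have h1 := hdecay s
    have h2 : ((⟪A (x s).1, (x s).2⟫ + ⟪A ((x s).2), (x s).1⟫)
        + (⟪(x s).2, -(A (x s).1 + k•(x s).2)⟫ + ⟪-(A (x s).1 + k•(x s).2), (x s).2⟫)
        + 2*ε*(⟪(x s).1, -(A (x s).1 + k•(x s).2)⟫ + ⟪(x s).2, (x s).2⟫)) * Real.exp (c*s)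
        ≤ (-c * E (x s)) * Real.exp (c*s) :=
      mul_le_mul_of_nonneg_right h1 (Real.exp_pos _).le
    have : (-c * E (x s)) * Real.exp (c*s) + E (x s) * (c * Real.exp (c*s)) = 0 := by ring
    linarith
  have hdiff : Differentiable ℝ g := fun s => (hg s).differentiableAt
  have hanti : Antitone g := antitone_of_deriv_nonpos hdiff hgderiv
  have hg0 : g 0 = E p₀ := by
    have hx0 : x 0 = p₀ := by
      rw [hxdef]
      have h : -((0:ℝ) • 𝓐) = 0 := by ext q <;> simp
      show NormedSpace.exp (-((0:ℝ) • 𝓐)) p₀ = p₀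
      rw [h, NormedSpace.exp_zero, ContinuousLinearMap.one_apply]
    simp [hgdef, hx0]
  have hgt : E (x t) * Real.exp (c*t) ≤ E p₀ := by
    have := hanti ht
    rw [hg0] at this
    simpa [hgdef] using this
  have hEt : E (x t) * Real.exp (c*t) ≤ C₂ * ‖p₀‖^2 := le_trans hgt (hupp p₀)
  have hlb := hlow (x t)
  have hct : (0:ℝ) < Real.exp (c*t) := Real.exp_pos _
  have hxt2 : ‖x t‖^2 * Real.exp (c*t) ≤ (C₂/c₁) * ‖p₀‖^2 := by
    have h3 : c₁ * (‖x t‖^2 * Real.exp (c*t)) ≤ C₂ * ‖p₀‖^2 := by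
      nlinarith
    have h4 : ‖x t‖^2 * Real.exp (c*t) ≤ (C₂ * ‖p₀‖^2)/c₁ :=
      (le_div_iff₀ hc₁).mpr (by rw [mul_comm]; exact h3)
    have h5 : (C₂ * ‖p₀‖^2)/c₁ = (C₂/c₁) * ‖p₀‖^2 := by ring
    linarith
  have hesq : Real.exp (-(c/2)*t)^2 = (Real.exp (c*t))⁻¹ := by
    rw [pow_two, ← Real.exp_add, ← Real.exp_neg]
    ring_nf
  have hfin2 : ‖x t‖^2 ≤ (M * Real.exp (-(c/2)*t) * ‖p₀‖)^2 := by
    have h5 : ‖x t‖^2 ≤ (C₂/c₁) * ‖p₀‖^2 * (Real.exp (c*t))⁻¹ := by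
      have hinv : (0:ℝ) < (Real.exp (c*t))⁻¹ := by positivity
      calc ‖x t‖^2 = (‖x t‖^2 * Real.exp (c*t)) * (Real.exp (c*t))⁻¹ := by
            field_simp
        _ ≤ (C₂/c₁) * ‖p₀‖^2 * (Real.exp (c*t))⁻¹ :=
            mul_le_mul_of_nonneg_right hxt2 hinv.le
    calc ‖x t‖^2 ≤ (C₂/c₁) * ‖p₀‖^2 * (Real.exp (c*t))⁻¹ := h5
      _ ≤ M^2 * ‖p₀‖^2 * (Real.exp (c*t))⁻¹ := by
          apply mul_le_mul_of_nonneg_right _ (by positivity)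
          exact mul_le_mul_of_nonneg_right hMsq (sq_nonneg _)
      _ = (M * Real.exp (-(c/2)*t) * ‖p₀‖)^2 := by
          rw [mul_pow, mul_pow, hesq]; ring
  have hr0 : (0:ℝ) ≤ M * Real.exp (-(c/2)*t) * ‖p₀‖ := by positivity
  have hfin : ‖x t‖ ≤ M * Real.exp (-(c/2)*t) * ‖p₀‖ := by
    have := Real.sqrt_le_sqrt hfin2
    rwa [Real.sqrt_sq (norm_nonneg _), Real.sqrt_sq hr0] at this
  exact hfin
end
end

section
/- One has the local Lipschitz estimate ‖G(φ¹(−τ₁)) − G(φ²(−τ₂))‖ ≤ (1 + ρ C_ρ) L_G d, where d = max_{θ∈[−h,0]} ‖φ¹(θ) − φ²(θ)‖ + max_{θ∈[−h,0]} ‖(φ¹)'(θ) − (φ²)'(θ)‖. -/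
open Set Real

/-- local Lipschitz estimate for the discrete state-dependent delay term. -/
theorem sdd_term_local_lipschitz
    (H : Type*) [NormedAddCommGroup H] [InnerProductSpace ℝ H] [CompleteSpace H]
    (G : H → H) (L_G : ℝ) (hLG : 0 ≤ L_G)
    (hG : ∀ x y : H, ‖G x - G y‖ ≤ L_G * ‖x - y‖)
    (h ρ C_ρ : ℝ) (hh : 0 < h) (hρ : 0 < ρ) (hC : 0 < C_ρ)
    (φ₁ φ₁' φ₂ φ₂' : ℝ → H)
    (hφ₁ : ∀ θ ∈ Icc (-h) (0:ℝ), HasDerivWithinAt φ₁ (φ₁' θ) (Icc (-h) 0) θ)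
    (hφ₁c : ContinuousOn φ₁' (Icc (-h) 0))
    (hφ₂ : ∀ θ ∈ Icc (-h) (0:ℝ), HasDerivWithinAt φ₂ (φ₂' θ) (Icc (-h) 0) θ)
    (hφ₂c : ContinuousOn φ₂' (Icc (-h) 0))
    (hbd₁ : (⨆ θ : Icc (-h) (0:ℝ), ‖φ₁ θ.1‖) + (⨆ θ : Icc (-h) (0:ℝ), ‖φ₁' θ.1‖) ≤ ρ)
    (hbd₂ : (⨆ θ : Icc (-h) (0:ℝ), ‖φ₂ θ.1‖) + (⨆ θ : Icc (-h) (0:ℝ), ‖φ₂' θ.1‖) ≤ ρ)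
    (τ₁ τ₂ : ℝ) (hτ₁ : τ₁ ∈ Icc (0:ℝ) h) (hτ₂ : τ₂ ∈ Icc (0:ℝ) h)
    (d : ℝ)
    (hd : d = (⨆ θ : Icc (-h) (0:ℝ), ‖φ₁ θ.1 - φ₂ θ.1‖)
        + ⨆ θ : Icc (-h) (0:ℝ), ‖φ₁' θ.1 - φ₂' θ.1‖)
    (hττ : |τ₁ - τ₂| ≤ C_ρ * d) :
    ‖G (φ₁ (-τ₁)) - G (φ₂ (-τ₂))‖ ≤ (1 + ρ * C_ρ) * L_G * d := by

  have hmem₁ : -τ₁ ∈ Icc (-h) (0:ℝ) := ⟨by linarith [hτ₁.2], by linarith [hτ₁.1]⟩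
  have hmem₂ : -τ₂ ∈ Icc (-h) (0:ℝ) := ⟨by linarith [hτ₂.2], by linarith [hτ₂.1]⟩
  have hcφ₁ : ContinuousOn φ₁ (Icc (-h) 0) := fun x hx => (hφ₁ x hx).continuousWithinAt
  have hcφ₂ : ContinuousOn φ₂ (Icc (-h) 0) := fun x hx => (hφ₂ x hx).continuousWithinAt
  -- bound on ‖φ₁'‖
  have hbdd1' : BddAbove (Set.range fun θ : Icc (-h) (0:ℝ) => ‖φ₁' θ.1‖) := by
    have h1 := (isCompact_Icc.image_of_continuousOn hφ₁c.norm).bddAbove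
    rwa [← Set.range_restrict] at h1
  have hsup1nn : 0 ≤ ⨆ θ : Icc (-h) (0:ℝ), ‖φ₁ θ.1‖ :=
    Real.iSup_nonneg (fun θ => norm_nonneg _)
  have hderiv_bd : ∀ θ ∈ Icc (-h) (0:ℝ), ‖φ₁' θ‖ ≤ ρ := by
    intro θ hθ
    have h1 : ‖φ₁' θ‖ ≤ ⨆ θ : Icc (-h) (0:ℝ), ‖φ₁' θ.1‖ :=
      le_ciSup hbdd1' ⟨θ, hθ⟩
    linarith
  -- MVT bound
  have hMVT : ‖φ₁ (-τ₁) - φ₁ (-τ₂)‖ ≤ ρ * ‖(-τ₁) - (-τ₂)‖ :=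
    (convex_Icc (-h) 0).norm_image_sub_le_of_norm_hasDerivWithin_le hφ₁ hderiv_bd hmem₂ hmem₁
  have habs : ‖(-τ₁) - (-τ₂)‖ = |τ₁ - τ₂| := by
    rw [Real.norm_eq_abs, ← abs_neg]; ring_nf
  -- sup bound on difference
  have hbddd : BddAbove (Set.range fun θ : Icc (-h) (0:ℝ) => ‖φ₁ θ.1 - φ₂ θ.1‖) := by
    have h1 := (isCompact_Icc.image_of_continuousOn ((hcφ₁.sub hcφ₂).norm)).bddAbove
    rwa [← Set.range_restrict] at h1
  have hsupd2nn : 0 ≤ ⨆ θ : Icc (-h) (0:ℝ), ‖φ₁' θ.1 - φ₂' θ.1‖ :=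
    Real.iSup_nonneg (fun θ => norm_nonneg _)
  have hdiff : ‖φ₁ (-τ₂) - φ₂ (-τ₂)‖ ≤ d := by
    have h1 : ‖φ₁ (-τ₂) - φ₂ (-τ₂)‖ ≤ ⨆ θ : Icc (-h) (0:ℝ), ‖φ₁ θ.1 - φ₂ θ.1‖ :=
      le_ciSup hbddd ⟨-τ₂, hmem₂⟩
    rw [hd]; linarith
  have hdnn : 0 ≤ d := by
    rw [hd]
    exact add_nonneg (Real.iSup_nonneg (fun θ => norm_nonneg _)) hsupd2nn
  have key : ‖φ₁ (-τ₁) - φ₂ (-τ₂)‖ ≤ (1 + ρ * C_ρ) * d := by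
    have htri : ‖φ₁ (-τ₁) - φ₂ (-τ₂)‖ ≤ ‖φ₁ (-τ₁) - φ₁ (-τ₂)‖ + ‖φ₁ (-τ₂) - φ₂ (-τ₂)‖ :=
      norm_sub_le_norm_sub_add_norm_sub _ _ _
    rw [habs] at hMVT
    nlinarith [hρ.le, hC.le]
  calc ‖G (φ₁ (-τ₁)) - G (φ₂ (-τ₂))‖ ≤ L_G * ‖φ₁ (-τ₁) - φ₂ (-τ₂)‖ := hG _ _
    _ ≤ L_G * ((1 + ρ * C_ρ) * d) := by
        exact mul_le_mul_of_nonneg_left key hLG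
    _ = (1 + ρ * C_ρ) * L_G * d := by ring
end

section
/- Suppose the initial datum φ ∈ W is twice continuously differentiable on [-h,0] and let u be the global mild solution with initial datum φ. Then u̇ is continuously differentiable on [-h,∞) (so that u is a C² solution satisfying ü(t) + k u̇(t) + A u(t) + F(u(t)) + M(u_t) = 0 pointwise for all t ≥ 0) if and only if the compatibility condition φ''(0) + k φ'(0) + A φ(0) + F(φ(0)) + M(φ) = 0 holds. -/
open Set Real MeasureTheory
open scoped RealInnerProductSpace

noncomputable section

lemma icc_nonempty {h : ℝ} (hh : 0 < h) : Nonempty ↑(Icc (-h) (0:ℝ)) :=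
  ⟨⟨0, by constructor <;> linarith⟩⟩

lemma ciSup_norm_le {n : ℕ} {h : ℝ} (hh : 0 < h) {g : ℝ → Euc n} {B : ℝ}
    (hB : ∀ θ ∈ Icc (-h) (0:ℝ), ‖g θ‖ ≤ B) :
    (⨆ θ : Icc (-h) (0:ℝ), ‖g θ.1‖) ≤ B := by
  haveI := icc_nonempty hh
  exact ciSup_le fun θ => hB θ.1 θ.2

lemma wnorm_sub_eq_zero {n : ℕ} {h : ℝ} (hh : 0 < h) {φ₁ φ₁' φ₂ φ₂' : ℝ → Euc n}
    (hag : ∀ θ ∈ Icc (-h) (0:ℝ), φ₁ θ = φ₂ θ ∧ φ₁' θ = φ₂' θ) :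
    Wnorm n h (φ₁ - φ₂) (φ₁' - φ₂') = 0 := by
  haveI := icc_nonempty hh
  have h1 : (⨆ θ : Icc (-h) (0:ℝ), ‖(φ₁ - φ₂) θ.1‖) = 0 := by
    have : (fun θ : Icc (-h) (0:ℝ) => ‖(φ₁ - φ₂) θ.1‖) = fun _ => (0:ℝ) :=
      funext fun θ => by simp [Pi.sub_apply, (hag θ.1 θ.2).1]
    rw [this]; exact ciSup_const
  have h2 : (⨆ θ : Icc (-h) (0:ℝ), ‖(φ₁' - φ₂') θ.1‖) = 0 := by
    have : (fun θ : Icc (-h) (0:ℝ) => ‖(φ₁' - φ₂') θ.1‖) = fun _ => (0:ℝ) :=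
      funext fun θ => by simp [Pi.sub_apply, (hag θ.1 θ.2).2]
    rw [this]; exact ciSup_const
  rw [Wnorm, h1, h2, add_zero]

lemma M_congr {n : ℕ} {h : ℝ} (hh : 0 < h) {M : (ℝ → Euc n) → (ℝ → Euc n) → Euc n}
    (hM1 : HypM1 n h M) {φ₁ φ₁' φ₂ φ₂' : ℝ → Euc n}
    (h1 : IsC1Pair n h φ₁ φ₁') (h2 : IsC1Pair n h φ₂ φ₂')
    (hag : ∀ θ ∈ Icc (-h) (0:ℝ), φ₁ θ = φ₂ θ ∧ φ₁' θ = φ₂' θ) :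
    M φ₁ φ₁' = M φ₂ φ₂' := by
  obtain ⟨C, hC, hCl⟩ := hM1 (max (Wnorm n h φ₁ φ₁') (max (Wnorm n h φ₂ φ₂') 1))
    (lt_of_lt_of_le one_pos (le_max_of_le_right (le_max_right _ _)))
  have hb := hCl φ₁ φ₁' φ₂ φ₂' h1 h2 (le_max_left _ _) (le_max_of_le_right (le_max_left _ _))
  rw [wnorm_sub_eq_zero hh hag, mul_zero] at hb
  exact sub_eq_zero.mp (norm_le_zero_iff.mp hb)

lemma seg_C1 {n : ℕ} {h : ℝ} (hh : 0 < h) {u u' : ℝ → Euc n}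
    (hd : ∀ t ∈ Ici (-h), HasDerivWithinAt u (u' t) (Ici (-h)) t)
    (hc : ContinuousOn u' (Ici (-h))) {s : ℝ} (hs : 0 ≤ s) :
    IsC1Pair n h (fun θ => u (s + θ)) (fun θ => u' (s + θ)) := by
  have hmaps : MapsTo (fun θ : ℝ => s + θ) (Icc (-h) (0:ℝ)) (Ici (-h)) := fun θ hθ => by
    have := hθ.1; simp only [mem_Ici]; linarith
  constructor
  · intro θ hθ
    have h1 : HasDerivWithinAt (fun θ : ℝ => s + θ) 1 (Icc (-h) 0) θ :=
      ((hasDerivAt_id θ).const_add s).hasDerivWithinAt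
    have h2 := (hd (s + θ) (hmaps hθ)).scomp θ h1 hmaps
    rw [one_smul] at h2
    exact h2
  · exact hc.comp ((continuous_const.add continuous_id).continuousOn) hmaps

set_option maxHeartbeats 1000000 in

/-- a global mild solution with `C²` initial datum is a classical `C²`
solution if and only if the compatibility condition
`φ''(0) + k φ'(0) + A φ(0) + F(φ(0)) + M(φ) = 0` holds. -/
theorem c2_smoothness_iff_compatibility
    (n : ℕ) (hn : 1 ≤ n) (h k : ℝ) (hh : 0 < h) (hk : 0 < k)
    (A : Euc n →L[ℝ] Euc n)
    (hA_symm : ∀ x y : Euc n, ⟪A x, y⟫ = ⟪x, A y⟫)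
    (hA_pos : ∀ x : Euc n, x ≠ 0 → 0 < ⟪A x, x⟫)
    (F : Euc n → Euc n) (hF1 : LocallyLipschitz F)
    (M : (ℝ → Euc n) → (ℝ → Euc n) → Euc n)
    (hM1 : HypM1 n h M)
    -- Hypothesis (F2)
    (Pot Pot0 Pot1 : Euc n → ℝ) (Fstar : Euc n → Euc n)
    (hPot_smooth : ContDiff ℝ 1 Pot)
    (hF_grad : ∀ x : Euc n, HasGradientAt Pot (F x - Fstar x) x)
    (L_Fstar : NNReal) (hFstar_lip : LipschitzWith L_Fstar Fstar)
    (hPot_split : ∀ x, Pot x = Pot0 x + Pot1 x)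
    (hPot0_nonneg : ∀ x, 0 ≤ Pot0 x)
    (hPot1_bound : ∀ η > (0:ℝ), ∃ C > (0:ℝ), ∀ x : Euc n,
      |Pot1 x| ≤ η * (⟪A x, x⟫ + Pot0 x) + C)
    -- Hypothesis (M2)
    (M₀ M₁ : ℝ) (hM₀ : 0 ≤ M₀) (hM₁ : 0 ≤ M₁)
    (hM2 : ∀ φ φ' : ℝ → Euc n, IsC1Pair n h φ φ' →
      ‖M φ φ'‖ ≤ M₀ + M₁ * ((⨆ θ : Icc (-h) (0:ℝ), Real.sqrt ⟪A (φ θ.1), φ θ.1⟫) +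
        ⨆ θ : Icc (-h) (0:ℝ), ‖φ' θ.1‖))
    (φ φ' φ'' : ℝ → Euc n) (hφ : IsC1Pair n h φ φ')
    -- `φ` is twice continuously differentiable on `[-h,0]`
    (hφ' : ∀ θ ∈ Icc (-h) (0:ℝ), HasDerivWithinAt φ' (φ'' θ) (Icc (-h) 0) θ)
    (hφ'' : ContinuousOn φ'' (Icc (-h) 0))
    (u u' : ℝ → Euc n) (hu : IsGlobalMildSol n h k A F M φ φ' u u') :
    (∃ u'' : ℝ → Euc n,
        (∀ t ∈ Ici (-h), HasDerivWithinAt u' (u'' t) (Ici (-h)) t) ∧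
        ContinuousOn u'' (Ici (-h)) ∧
        ∀ t ∈ Ici (0:ℝ), u'' t + k • u' t + A (u t) + F (u t)
            + M (fun θ => u (t + θ)) (fun θ => u' (t + θ)) = 0)
      ↔ φ'' 0 + k • φ' 0 + A (φ 0) + F (φ 0) + M φ φ' = 0 := by
  
  obtain ⟨hud, huc, huinit, hueq⟩ := hu
  have hh0 : -h < (0:ℝ) := by linarith
  have h0mem : (0:ℝ) ∈ Icc (-h) (0:ℝ) := ⟨hh0.le, le_rfl⟩
  have h0Ici : (0:ℝ) ∈ Ici (-h) := hh0.le
  have hsub0 : Ici (0:ℝ) ⊆ Ici (-h) := Ici_subset_Ici.mpr hh0.le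
  have hsubIcc : Icc (-h) (0:ℝ) ⊆ Ici (-h) := fun x hx => hx.1
  have hIci : Icc (-h) (0:ℝ) ∪ Ici (0:ℝ) = Ici (-h) := by
    ext x
    simp only [mem_union, mem_Icc, mem_Ici]
    constructor
    · rintro (⟨a, b⟩ | a) <;> linarith
    · intro hx
      rcases le_or_gt x 0 with h0 | h0
      · exact Or.inl ⟨hx, h0⟩
      · exact Or.inr h0.le
  have hucont : ContinuousOn u (Ici (-h)) := fun t ht => (hud t ht).continuousWithinAt
  have hseg : ∀ s : ℝ, 0 ≤ s → IsC1Pair n h (fun θ => u (s + θ)) (fun θ => u' (s + θ)) :=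
    fun s hs => seg_C1 hh hud huc hs
  have hM0 : M (fun θ => u (0 + θ)) (fun θ => u' (0 + θ)) = M φ φ' := by
    apply M_congr hh hM1 (hseg 0 le_rfl) hφ
    intro θ hθ
    simp only [zero_add]
    exact huinit θ hθ
  set G : ℝ → Euc n := fun s =>
    k • u' s + A (u s) + F (u s) + M (fun θ => u (s + θ)) (fun θ => u' (s + θ)) with hG
  -- continuity of the delay term
  have hMcont : ContinuousOn
      (fun s => M (fun θ => u (s + θ)) (fun θ => u' (s + θ))) (Ici (0:ℝ)) := by
    intro t ht
    rw [Metric.continuousWithinAt_iff]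
    intro ε hε
    have hcpt : IsCompact (Icc (-h) (t + 1)) := isCompact_Icc
    have hsubc : Icc (-h) (t + 1) ⊆ Ici (-h) := Icc_subset_Ici_self
    obtain ⟨B, hB⟩ := hcpt.exists_bound_of_continuousOn (hucont.mono hsubc)
    obtain ⟨B', hB'⟩ := hcpt.exists_bound_of_continuousOn (huc.mono hsubc)
    have htmem : (0:ℝ) ∈ Icc (-h) (t + 1) := ⟨hh0.le, by have := mem_Ici.mp ht; linarith⟩
    have hB0 : 0 ≤ B := le_trans (norm_nonneg _) (hB 0 htmem)
    have hB'0 : 0 ≤ B' := le_trans (norm_nonneg _) (hB' 0 htmem)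
    obtain ⟨C, hCpos, hC⟩ := hM1 (B + B' + 1) (by linarith)
    have huc1 := Metric.uniformContinuousOn_iff.mp
      (hcpt.uniformContinuousOn_of_continuous (hucont.mono hsubc))
    have huc2 := Metric.uniformContinuousOn_iff.mp
      (hcpt.uniformContinuousOn_of_continuous (huc.mono hsubc))
    obtain ⟨δ₁, hδ₁pos, hδ₁⟩ := huc1 (ε / (4 * C)) (by positivity)
    obtain ⟨δ₂, hδ₂pos, hδ₂⟩ := huc2 (ε / (4 * C)) (by positivity)
    refine ⟨min (min δ₁ δ₂) 1, by positivity, ?_⟩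
    intro s hs hst
    have hst1 : |s - t| < 1 := by
      rw [Real.dist_eq] at hst
      exact lt_of_lt_of_le hst (min_le_right _ _)
    have hstδ₁ : |s - t| < δ₁ := by
      rw [Real.dist_eq] at hst
      exact lt_of_lt_of_le hst (le_trans (min_le_left _ _) (min_le_left _ _))
    have hstδ₂ : |s - t| < δ₂ := by
      rw [Real.dist_eq] at hst
      exact lt_of_lt_of_le hst (le_trans (min_le_left _ _) (min_le_right _ _))
    have habs := abs_lt.mp hst1
    have hs0 := mem_Ici.mp hs
    have ht0 := mem_Ici.mp ht
    have hmem : ∀ θ ∈ Icc (-h) (0:ℝ), s + θ ∈ Icc (-h) (t + 1) ∧ t + θ ∈ Icc (-h) (t + 1) := by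
      intro θ hθ
      obtain ⟨hθ1, hθ2⟩ := hθ
      exact ⟨⟨by linarith, by linarith⟩, ⟨by linarith, by linarith⟩⟩
    have hWs : Wnorm n h (fun θ => u (s + θ)) (fun θ => u' (s + θ)) ≤ B + B' := by
      rw [Wnorm]
      exact add_le_add
        (ciSup_norm_le (g := fun θ => u (s + θ)) hh fun θ hθ => hB _ (hmem θ hθ).1)
        (ciSup_norm_le (g := fun θ => u' (s + θ)) hh fun θ hθ => hB' _ (hmem θ hθ).1)
    have hWt : Wnorm n h (fun θ => u (t + θ)) (fun θ => u' (t + θ)) ≤ B + B' := by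
      rw [Wnorm]
      exact add_le_add
        (ciSup_norm_le (g := fun θ => u (t + θ)) hh fun θ hθ => hB _ (hmem θ hθ).2)
        (ciSup_norm_le (g := fun θ => u' (t + θ)) hh fun θ hθ => hB' _ (hmem θ hθ).2)
    have hdist : ∀ θ ∈ Icc (-h) (0:ℝ), dist (s + θ) (t + θ) = |s - t| := by
      intro θ hθ
      rw [Real.dist_eq]
      ring_nf
    have hsup1 : (⨆ θ : Icc (-h) (0:ℝ),
        ‖((fun θ => u (s + θ)) - fun θ => u (t + θ)) θ.1‖) ≤ ε / (4 * C) := by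
      apply ciSup_norm_le hh
      intro θ hθ
      rw [Pi.sub_apply, ← dist_eq_norm]
      exact (hδ₁ _ (hmem θ hθ).1 _ (hmem θ hθ).2 (by rw [hdist θ hθ]; exact hstδ₁)).le
    have hsup2 : (⨆ θ : Icc (-h) (0:ℝ),
        ‖((fun θ => u' (s + θ)) - fun θ => u' (t + θ)) θ.1‖) ≤ ε / (4 * C) := by
      apply ciSup_norm_le hh
      intro θ hθ
      rw [Pi.sub_apply, ← dist_eq_norm]
      exact (hδ₂ _ (hmem θ hθ).1 _ (hmem θ hθ).2 (by rw [hdist θ hθ]; exact hstδ₂)).le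
    calc dist (M (fun θ => u (s + θ)) (fun θ => u' (s + θ)))
          (M (fun θ => u (t + θ)) (fun θ => u' (t + θ)))
        = ‖M (fun θ => u (s + θ)) (fun θ => u' (s + θ))
            - M (fun θ => u (t + θ)) (fun θ => u' (t + θ))‖ := dist_eq_norm _ _
      _ ≤ C * Wnorm n h ((fun θ => u (s + θ)) - fun θ => u (t + θ))
            ((fun θ => u' (s + θ)) - fun θ => u' (t + θ)) :=
          hC _ _ _ _ (hseg s hs0) (hseg t ht0) (by linarith) (by linarith)
      _ ≤ C * (ε / (4 * C) + ε / (4 * C)) :=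
          mul_le_mul_of_nonneg_left (add_le_add hsup1 hsup2) hCpos.le
      _ < ε := by
          have hCne : C ≠ 0 := ne_of_gt hCpos
          have : C * (ε / (4 * C) + ε / (4 * C)) = ε / 2 := by field_simp; ring
          rw [this]; linarith
  have hGcont : ContinuousOn G (Ici (0:ℝ)) := by
    rw [hG]
    exact (((huc.mono hsub0).const_smul k).add
      (A.continuous.comp_continuousOn (hucont.mono hsub0))).add
      (hF1.continuous.comp_continuousOn (hucont.mono hsub0)) |>.add hMcont
  have hG0 : G 0 = k • φ' 0 + A (φ 0) + F (φ 0) + M φ φ' := by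
    rw [hG]
    simp only
    rw [(huinit 0 h0mem).1, (huinit 0 h0mem).2, hM0]
  constructor
  · rintro ⟨u'', hd2, hc2, heq⟩
    have h00 := heq 0 self_mem_Ici
    have hu''0 : u'' 0 = φ'' 0 := by
      have d1 : HasDerivWithinAt u' (u'' 0) (Icc (-h) 0) 0 := (hd2 0 h0Ici).mono hsubIcc
      have d2 : HasDerivWithinAt u' (φ'' 0) (Icc (-h) 0) 0 :=
        (hφ' 0 h0mem).congr (fun x hx => (huinit x hx).2) ((huinit 0 h0mem).2)
      exact (uniqueDiffOn_Icc hh0 0 h0mem).eq_deriv _ d1 d2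
    rw [hu''0, hM0, (huinit 0 h0mem).1, (huinit 0 h0mem).2] at h00
    exact h00
  · intro hcompat
    have hGext_cont : Continuous (fun t : ℝ => G (max t 0)) :=
      hGcont.comp_continuous (continuous_id.max continuous_const) fun x => le_max_right x 0
    set v : ℝ → Euc n := fun t => φ' 0 - ∫ s in (0:ℝ)..t, G (max s 0) with hv
    have hveq : ∀ t ∈ Ici (0:ℝ), u' t = v t := by
      intro t ht
      rw [hueq t ht, hv]
      congr 1
      apply intervalIntegral.integral_congr
      intro x hx
      rw [uIcc_of_le (mem_Ici.mp ht)] at hx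
      simp only
      rw [max_eq_left hx.1]
    have hvd : ∀ t : ℝ, HasDerivAt v (-(G (max t 0))) t := by
      intro t
      have h1 := (hGext_cont.integral_hasStrictDerivAt 0 t).hasDerivAt
      have h2 := (hasDerivAt_const t (φ' 0)).sub h1
      rw [zero_sub] at h2
      exact h2
    set w : ℝ → Euc n := fun t => if t < 0 then φ'' t else -G t with hw
    have hweq : ∀ t : ℝ, 0 ≤ t → w t = -G t := by
      intro t ht
      rw [hw]; simp [not_lt.mpr ht]
    have hphi0 : φ'' 0 = -G 0 := by
      rw [hG0]
      have h2 : φ'' 0 + (k • φ' 0 + A (φ 0) + F (φ 0) + M φ φ') = 0 := by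
        rw [← hcompat]; abel
      exact eq_neg_of_add_eq_zero_left h2
    have hwphi : ∀ θ ∈ Icc (-h) (0:ℝ), w θ = φ'' θ := by
      intro θ hθ
      rcases lt_or_eq_of_le hθ.2 with h0 | h0
      · rw [hw]; simp [h0]
      · rw [h0, hweq 0 le_rfl, hphi0]
    have hd_right : ∀ t ∈ Ici (0:ℝ), HasDerivWithinAt u' (-G t) (Ici 0) t := by
      intro t ht
      have h1 := ((hvd t).hasDerivWithinAt (s := Ici 0)).congr
        (fun x hx => hveq x hx) (hveq t ht)
      rwa [max_eq_left (mem_Ici.mp ht)] at h1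
    have hd_left : ∀ t ∈ Icc (-h) (0:ℝ), HasDerivWithinAt u' (φ'' t) (Icc (-h) 0) t :=
      fun t ht => (hφ' t ht).congr (fun x hx => (huinit x hx).2) ((huinit t ht).2)
    refine ⟨w, ?_, ?_, ?_⟩
    · intro t ht
      rw [← hIci]
      rcases lt_trichotomy t 0 with h0 | h0 | h0
      · refine HasDerivWithinAt.union ?_ ?_
        · have h1 := hd_left t ⟨mem_Ici.mp ht, h0.le⟩
          rwa [show φ'' t = w t from by rw [hw]; simp [h0]] at h1
        · exact HasFDerivWithinAt.of_notMem_closure (by rwa [closure_Ici, mem_Ici, not_le])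
      · subst h0
        refine HasDerivWithinAt.union ?_ ?_
        · rw [hweq 0 le_rfl, ← hphi0]; exact hd_left 0 h0mem
        · rw [hweq 0 le_rfl]; exact hd_right 0 self_mem_Ici
      · refine HasDerivWithinAt.union ?_ ?_
        · exact HasFDerivWithinAt.of_notMem_closure
            (by rw [isClosed_Icc.closure_eq]; exact fun hc => absurd hc.2 (not_le.mpr h0))
        · rw [hweq t h0.le]; exact hd_right t h0.le
    · have c1 : ContinuousOn w (Icc (-h) 0) := hφ''.congr hwphi
      have c2 : ContinuousOn w (Ici 0) := hGcont.neg.congr fun t ht => hweq t (mem_Ici.mp ht)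
      intro t ht
      rw [← hIci]
      apply ContinuousWithinAt.union
      · by_cases hmem : t ∈ Icc (-h) (0:ℝ)
        · exact c1 t hmem
        · exact continuousWithinAt_of_notMem_closure (by rwa [isClosed_Icc.closure_eq])
      · by_cases hmem : t ∈ Ici (0:ℝ)
        · exact c2 t hmem
        · exact continuousWithinAt_of_notMem_closure (by rwa [closure_Ici])
    · intro t ht
      rw [hweq t (mem_Ici.mp ht), hG]
      simp only
      abel
end
end
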